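/- If the node c of G has degree 1, then det(B − tI) = t² · det(B' − tI) for all real t, where B is the NB-matrix of G and B' is the NB-matrix of the graph obtained from G by removing c. In particular, removing a degree-1 node does not change the nonzero eigenvalues of the NB-matrix. -/

import Mathlib

open Matrix

/-- The non-backtracking matrix of a simple graph `G`: rows and columns are indexed by
darts (directed edges); entry `(k→l, i→j)` is `δ_{jk} (1 - δ_{il})`. -/
def nbMatrix {V : Type*} [DecidableEq V] (G : SimpleGraph V) :
    Matrix G.Dart G.Dart ℝ := fun r c =>
  (if c.toProd.2 = r.toProd.1 then (1 : ℝ) else 0) *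
  (if c.toProd.1 = r.toProd.2 then 0 else 1)


instance {V : Type*} (G : SimpleGraph V) [DecidableRel G.Adj] (s : Set V) :
    DecidableRel (G.induce s).Adj := fun a b =>
  decidable_of_iff (G.Adj a b) Iff.rfl

theorem nb_aux {V : Type*} [Fintype V] [DecidableEq V]
    (G : SimpleGraph V) [DecidableRel G.Adj] (c u : V) (hadj : G.Adj c u)
    (hu : ∀ w, G.Adj c w → w = u) :
    (∀ t : ℝ, (nbMatrix G - t • 1).det =
        t ^ 2 * (nbMatrix (G.induce {v | v ≠ c}) - t • 1).det) ∧
      Fintype.card G.Dart =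
        Fintype.card (G.induce {v | v ≠ c}).Dart + 2 := by
  set s : Set V := {v | v ≠ c} with hs
  set G' := G.induce s with hG'
  have hcu : c ≠ u := G.ne_of_adj hadj
  let d1 : G.Dart := ⟨(u, c), hadj.symm⟩
  let d2 : G.Dart := ⟨(c, u), hadj⟩
  let lift : G'.Dart → G.Dart := fun d => ⟨(↑d.toProd.1, ↑d.toProd.2), d.adj⟩
  have hlift1 : ∀ d : G'.Dart, (lift d).toProd.1 ≠ c := fun d => d.toProd.1.2
  have hlift2 : ∀ d : G'.Dart, (lift d).toProd.2 ≠ c := fun d => d.toProd.2.2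
  have hlift_inj : Function.Injective lift := by
    intro d d' h
    have h1 : (d.toProd.1 : V) = (d'.toProd.1 : V) :=
      congrArg (fun x : G.Dart => x.toProd.1) h
    have h2 : (d.toProd.2 : V) = (d'.toProd.2 : V) :=
      congrArg (fun x : G.Dart => x.toProd.2) h
    exact SimpleGraph.Dart.ext _ _
      (Prod.ext (Subtype.ext h1) (Subtype.ext h2))
  let f : (Unit ⊕ (G'.Dart ⊕ Unit)) → G.Dart := fun x =>
    match x with
    | .inl _ => d1
    | .inr (.inl d) => lift d
    | .inr (.inr _) => d2
  let g : G.Dart → (Unit ⊕ (G'.Dart ⊕ Unit)) := fun d =>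
    if h2 : d.toProd.2 = c then .inl ()
    else if h1 : d.toProd.1 = c then .inr (.inr ())
    else .inr (.inl ⟨(⟨d.toProd.1, h1⟩, ⟨d.toProd.2, h2⟩), d.adj⟩)
  have hgf : Function.LeftInverse g f := by
    intro x
    rcases x with _ | (d | _)
    · show g d1 = _
      simp [g, d1]
    · show g (lift d) = _
      simp only [g, dif_neg (hlift2 d), dif_neg (hlift1 d)]
      rfl
    · show g d2 = _
      simp [g, d2, Ne.symm hcu]
  have hfg : Function.RightInverse g f := by
    intro d
    by_cases h2 : d.toProd.2 = c
    · have h1 : d.toProd.1 = u := hu _ (by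
        have := d.adj.symm
        rwa [h2] at this)
      show f (g d) = d
      simp only [g, dif_pos h2]
      show d1 = d
      exact (SimpleGraph.Dart.ext _ _ (Prod.ext h1 h2)).symm
    · by_cases h1 : d.toProd.1 = c
      · have h2' : d.toProd.2 = u := hu _ (by
          have := d.adj
          rwa [h1] at this)
        show f (g d) = d
        simp only [g, dif_neg h2, dif_pos h1]
        show d2 = d
        exact (SimpleGraph.Dart.ext _ _ (Prod.ext h1 h2')).symm
      · show f (g d) = d
        simp only [g, dif_neg h2, dif_neg h1]
        rfl
  let e : (Unit ⊕ (G'.Dart ⊕ Unit)) ≃ G.Dart := ⟨f, g, hgf, hfg⟩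
  have hcard : Fintype.card G.Dart = Fintype.card G'.Dart + 2 := by
    rw [← Fintype.card_congr e]
    simp [Fintype.card_sum]
    ring
  refine ⟨?_, hcard⟩
  intro t
  have key : ((nbMatrix G - t • 1).submatrix e e) =
      fromBlocks (Matrix.of fun _ _ : Unit => -t)
        (Matrix.of fun (x : Unit) y => (nbMatrix G - t • 1) (e (.inl x)) (e (.inr y)))
        0
        (fromBlocks (nbMatrix G' - t • 1)
          (Matrix.of fun x (y : Unit) =>
            (nbMatrix G - t • 1) (e (.inr (.inl x))) (e (.inr (.inr y))))
          0 (Matrix.of fun _ _ : Unit => -t)) := by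
    ext x y
    have he : ∀ z, e z = f z := fun _ => rfl
    rcases x with _ | (x | _) <;> rcases y with _ | (y | _)
    · -- row d1, col d1
      show (nbMatrix G - t • 1) d1 d1 = -t
      simp [nbMatrix, d1, Matrix.sub_apply, Matrix.smul_apply, one_apply, Ne.symm hcu, hcu]
    · rfl
    · rfl
    · -- row lift x, col d1 : zero
      show (nbMatrix G - t • 1) (lift x) d1 = 0
      have hne : lift x ≠ d1 := by
        intro h
        exact hlift2 x (congrArg (fun z : G.Dart => z.toProd.2) h)
      simp [nbMatrix, d1, Matrix.sub_apply, Matrix.smul_apply, one_apply, hne, Ne.symm (hlift1 x)]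
    · -- row lift x, col lift y
      show (nbMatrix G - t • 1) (lift x) (lift y) = (nbMatrix G' - t • 1) x y
      have hone : ((1 : Matrix G.Dart G.Dart ℝ) (lift x) (lift y)) =
          ((1 : Matrix G'.Dart G'.Dart ℝ) x y) := by
        simp only [one_apply, hlift_inj.eq_iff]
      simp only [Matrix.sub_apply, Matrix.smul_apply, hone]
      congr 1
      simp only [nbMatrix, lift]
      simp [Subtype.coe_inj]
    · rfl
    · -- row d2, col d1 : zero
      show (nbMatrix G - t • 1) d2 d1 = 0
      have hne : d2 ≠ d1 := by
        intro h
        exact hcu (congrArg (fun z : G.Dart => z.toProd.1) h)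
      simp [nbMatrix, d1, d2, Matrix.sub_apply, Matrix.smul_apply, one_apply, hne]
    · -- row d2, col lift y : zero
      show (nbMatrix G - t • 1) d2 (lift y) = 0
      have hne : d2 ≠ lift y := by
        intro h
        exact hlift1 y (congrArg (fun z : G.Dart => z.toProd.1) h).symm
      simp [nbMatrix, d2, Matrix.sub_apply, Matrix.smul_apply, one_apply, hne, hlift2 y]
    · -- row d2, col d2
      show (nbMatrix G - t • 1) d2 d2 = -t
      simp [nbMatrix, d2, Matrix.sub_apply, Matrix.smul_apply, one_apply, hcu, Ne.symm hcu]
  rw [← Matrix.det_submatrix_equiv_self e, key,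
    Matrix.det_fromBlocks_zero₂₁, Matrix.det_fromBlocks_zero₂₁]
  simp only [Matrix.det_unique, Matrix.of_apply]
  ring

theorem eval_charpoly_aux {n : Type*} [Fintype n] [DecidableEq n] (M : Matrix n n ℝ) (t : ℝ) :
    M.charpoly.eval t = (-1 : ℝ) ^ (Fintype.card n) * (M - t • 1).det := by
  have h1' : M.charpoly.eval t = ((charmatrix M).map (Polynomial.evalRingHom t)).det := by
    rw [Matrix.charpoly, ← Polynomial.coe_evalRingHom, RingHom.map_det,
      RingHom.mapMatrix_apply]
  have h2' : (charmatrix M).map (Polynomial.evalRingHom t) = t • 1 - M := by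
    ext i j
    rw [Matrix.map_apply, charmatrix_apply]
    by_cases h : i = j <;>
      simp [h, Matrix.diagonal, Matrix.one_apply, Matrix.smul_apply, Matrix.sub_apply]
  rw [h1', h2', show t • (1 : Matrix n n ℝ) - M = -(M - t • 1) from (neg_sub _ _).symm, Matrix.det_neg]

theorem det_nbMatrix_removeDegreeOne {V : Type*} [Fintype V] [DecidableEq V]
    (G : SimpleGraph V) [DecidableRel G.Adj] (c : V) (hc : G.degree c = 1) :
    (∀ t : ℝ, (nbMatrix G - t • 1).det =
        t ^ 2 * (nbMatrix (G.induce {v | v ≠ c}) - t • 1).det) ∧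
      ∀ μ : ℂ, μ ≠ 0 →
        (((nbMatrix G).charpoly.map (algebraMap ℝ ℂ)).IsRoot μ ↔
          ((nbMatrix (G.induce {v | v ≠ c})).charpoly.map (algebraMap ℝ ℂ)).IsRoot μ) := by
  obtain ⟨u, hu⟩ : ∃ u, G.neighborFinset c = {u} :=
    Finset.card_eq_one.mp hc
  have hadj : G.Adj c u := by
    rw [← SimpleGraph.mem_neighborFinset, hu]
    exact Finset.mem_singleton_self u
  have huniq : ∀ w, G.Adj c w → w = u := by
    intro w hw
    have := (SimpleGraph.mem_neighborFinset G c w).mpr hw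
    rw [hu] at this
    exact Finset.mem_singleton.mp this
  obtain ⟨h1, hcard⟩ := nb_aux G c u hadj huniq
  refine ⟨h1, ?_⟩
  have hpoly : (nbMatrix G).charpoly =
      Polynomial.X ^ 2 * (nbMatrix (G.induce {v | v ≠ c})).charpoly := by
    apply Polynomial.funext
    intro t
    rw [Polynomial.eval_mul, Polynomial.eval_pow, Polynomial.eval_X, eval_charpoly_aux, eval_charpoly_aux,
      h1 t, hcard]
    ring
  intro μ hμ
  rw [hpoly, Polynomial.map_mul, Polynomial.map_pow, Polynomial.map_X]
  simp only [Polynomial.IsRoot.def, Polynomial.eval_mul, Polynomial.eval_pow,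
    Polynomial.eval_X, mul_eq_zero]
  have h2 : μ ^ 2 ≠ 0 := pow_ne_zero _ hμ
  tauto
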